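/- arXiv:2002.08228 — 5 statements merged into one kernel-verified Lean document; each statement's English description precedes it below -/
import Mathlib

section
/- Every real number can be written as the sum of two Liouville numbers. -/
/-- Every real number can be written as the sum of two Liouville numbers. -/
theorem sum_of_two_liouville (ξ : ℝ) :
    ∃ x y : ℝ, Liouville x ∧ Liouville y ∧ x + y = ξ := by
  have h1 : ∀ᶠ x in residual ℝ, Liouville x := eventually_residual_liouville
  have h2 : ∀ᶠ x in residual ℝ, Liouville (ξ - x) := by
    have h3 := h1
    rw [← ((Homeomorph.neg ℝ).trans (Homeomorph.addLeft ξ)).residual_map_eq] at h3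
    simpa [sub_eq_add_neg] using Filter.eventually_map.mp h3
  have hd := dense_of_mem_residual (h1.and h2)
  obtain ⟨x, hx, hx'⟩ := hd.nonempty
  exact ⟨x, ξ - x, hx, hx', by ring⟩
end

section
/- For any integer n ≥ 1, for every real vector (ξ₁, …, ξ_{n-1}) ∈ ℝ^{n-1} there exist Liouville numbers x₀, x₁, …, x_{n-1} such that x₀ + x_i = ξ_i for every 1 ≤ i ≤ n-1. Equivalently, the map Ψ : 𝓛^n → ℝ^{n-1} given by Ψ(x₀,…,x_{n-1}) = (x₀+x₁, …, x₀+x_{n-1}) is surjective. -/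
/-- For any `n ≥ 1` and any real vector `(ξ₁, …, ξ_{n-1})`, there exist Liouville
numbers `x₀, x₁, …, x_{n-1}` with `x₀ + x_i = ξ_i` for all `1 ≤ i ≤ n-1`; that is,
the sum map `Ψ : 𝓛ⁿ → ℝ^{n-1}` is surjective. -/
theorem liouville_sum_map_surjective (n : ℕ) (hn : 1 ≤ n) (ξ : Fin (n - 1) → ℝ) :
    ∃ x₀ : ℝ, Liouville x₀ ∧ ∀ i : Fin (n - 1), Liouville (ξ i - x₀) := by
  have key : ∀ᶠ x in residual ℝ, Liouville x ∧ ∀ i : Fin (n - 1), Liouville (ξ i - x) := by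
    refine eventually_residual_liouville.and (Filter.eventually_all.2 fun i => ?_)
    let h : ℝ ≃ₜ ℝ := (Homeomorph.neg ℝ).trans (Homeomorph.addLeft (ξ i))
    have hmem : {y : ℝ | Liouville y} ∈ (residual ℝ).map h :=
      h.residual_map_eq.symm ▸ eventually_residual_liouville
    refine Filter.mem_of_superset (Filter.mem_map.1 hmem) fun x hx => ?_
    simpa [h, Homeomorph.trans_apply, sub_eq_add_neg] using hx
  obtain ⟨x, hx⟩ := (dense_of_mem_residual key).nonempty
  exact ⟨x, hx⟩
end

section
/- For any integer n ≥ 1, the n-fold Cartesian product 𝓛^n of the set of Liouville numbers has packing dimension exactly n. -/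
open MeasureTheory Metric

/-- The packing pre-measure of dimension `s` of a set `A`: the limit (infimum over
`δ > 0`) of the supremum over finite `δ`-packings of `A` (finite families of
pairwise disjoint closed balls of radii at most `δ` centered in `A`) of
`∑ (2 r_i)^s`. -/
noncomputable def packingPremeasure {X : Type*} [PseudoMetricSpace X] (s : ℝ)
    (A : Set X) : ENNReal :=
  ⨅ (δ : ℝ) (_ : 0 < δ),
    ⨆ (t : Finset (X × ℝ))
      (_ : (∀ p ∈ t, p.1 ∈ A ∧ 0 < p.2 ∧ p.2 ≤ δ) ∧
        (t : Set (X × ℝ)).Pairwise fun p q =>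
          Disjoint (closedBall p.1 p.2) (closedBall q.1 q.2)),
      ∑ p ∈ t, ENNReal.ofReal ((2 * p.2) ^ s)

/-- The packing measure of dimension `s`: infimum over countable covers of the sum
of packing pre-measures of the pieces. -/
noncomputable def packingMeasure {X : Type*} [PseudoMetricSpace X] (s : ℝ)
    (A : Set X) : ENNReal :=
  ⨅ (E : ℕ → Set X) (_ : A ⊆ ⋃ i, E i), ∑' i, packingPremeasure s (E i)

/-- The packing dimension of a set. -/
noncomputable def packingDim {X : Type*} [PseudoMetricSpace X] (A : Set X) :
    ENNReal :=
  ⨅ (s : NNReal) (_ : packingMeasure s A = 0), (s : ENNReal)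

open Filter in
lemma aux_premeasure_bounded {n : ℕ} (s : ℝ) (hs : (n : ℝ) < s) (R : ℝ) :
    packingPremeasure s (closedBall (0 : Fin n → ℝ) R) = 0 := by
  set p : ℝ := s - n with hp
  have hp0 : 0 < p := by simp [hp]; linarith
  -- bound for each δ ∈ (0,1]
  have key : ∀ δ : ℝ, 0 < δ → δ ≤ 1 →
      packingPremeasure s (closedBall (0 : Fin n → ℝ) R) ≤
        ENNReal.ofReal ((2 * δ) ^ p) * ENNReal.ofReal ((2 * (|R| + 1)) ^ n) := by
    intro δ hδ hδ1
    refine le_trans (iInf₂_le δ hδ) ?_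
    refine iSup₂_le fun t ht => ?_
    obtain ⟨h1, h2⟩ := ht
    calc ∑ q ∈ t, ENNReal.ofReal ((2 * q.2) ^ s)
        ≤ ∑ q ∈ t, ENNReal.ofReal ((2 * δ) ^ p) * volume (closedBall q.1 q.2) := by
          refine Finset.sum_le_sum fun q hq => ?_
          obtain ⟨hqA, hq0, hqδ⟩ := h1 q hq
          rw [Real.volume_pi_closedBall _ hq0.le]
          rw [← ENNReal.ofReal_mul (by positivity)]
          refine ENNReal.ofReal_le_ofReal ?_
          have h2q : (0:ℝ) < 2 * q.2 := by linarith
          have : (2 * q.2) ^ s = (2 * q.2) ^ p * (2 * q.2) ^ (n:ℝ) := by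
            rw [← Real.rpow_add h2q, hp, sub_add_cancel]
          rw [this, Real.rpow_natCast]
          simp only [Fintype.card_fin]
          exact mul_le_mul_of_nonneg_right
            (Real.rpow_le_rpow h2q.le (by linarith) hp0.le) (by positivity)
      _ = ENNReal.ofReal ((2 * δ) ^ p) * ∑ q ∈ t, volume (closedBall q.1 q.2) := by
          rw [Finset.mul_sum]
      _ ≤ ENNReal.ofReal ((2 * δ) ^ p) * ENNReal.ofReal ((2 * (|R| + 1)) ^ n) := by
          gcongr
          have : ∑ q ∈ t, volume (closedBall q.1 q.2)
              = volume (⋃ q ∈ t, closedBall q.1 q.2) := by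
            rw [measure_biUnion_finset h2 fun q _ => measurableSet_closedBall]
          rw [this]
          have hsub : (⋃ q ∈ t, closedBall q.1 q.2) ⊆
              closedBall (0 : Fin n → ℝ) (|R| + 1) := by
            refine Set.iUnion₂_subset fun q hq => ?_
            obtain ⟨hqA, hq0, hqδ⟩ := h1 q hq
            refine closedBall_subset_closedBall' ?_
            have := mem_closedBall.mp hqA
            calc q.2 + dist q.1 0 ≤ 1 + |R| := by
                  refine add_le_add (hqδ.trans hδ1) (this.trans (le_abs_self R))
              _ = |R| + 1 := by ring
          calc volume (⋃ q ∈ t, closedBall q.1 q.2)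
              ≤ volume (closedBall (0 : Fin n → ℝ) (|R| + 1)) := measure_mono hsub
            _ = ENNReal.ofReal ((2 * (|R| + 1)) ^ n) := by
                rw [Real.volume_pi_closedBall _ (by positivity), Fintype.card_fin]
  -- now take δ = 1/(k+1) and let k → ∞
  refine le_antisymm ?_ zero_le
  have hlim : Tendsto (fun k : ℕ =>
      ENNReal.ofReal ((2 * (1 / (k+1) : ℝ)) ^ p) * ENNReal.ofReal ((2 * (|R| + 1)) ^ n))
      atTop (nhds 0) := by
    have h1 : Tendsto (fun k : ℕ => (2 * (1 / (k+1) : ℝ))) atTop (nhds 0) := by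
      have : Tendsto (fun k : ℕ => 1 / ((k : ℝ) + 1)) atTop (nhds 0) :=
        tendsto_one_div_add_atTop_nhds_zero_nat
      simpa using this.const_mul 2
    have h2 : Tendsto (fun k : ℕ => (2 * (1 / (k+1) : ℝ)) ^ p) atTop (nhds 0) := by
      have hc : ContinuousAt (fun x : ℝ => x ^ p) 0 :=
        Real.continuousAt_rpow_const 0 p (Or.inr hp0.le)
      have := hc.tendsto.comp h1
      simpa [Function.comp_def, Real.zero_rpow hp0.ne'] using this
    have h3 : Tendsto (fun k : ℕ =>
        ENNReal.ofReal ((2 * (1 / (k+1) : ℝ)) ^ p)) atTop (nhds 0) := by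
      have := (ENNReal.continuous_ofReal.tendsto 0).comp h2
      simpa [Function.comp_def] using this
    simpa using ENNReal.Tendsto.mul_const h3 (Or.inr ENNReal.ofReal_ne_top)
  refine ge_of_tendsto' hlim fun k => key (1/(k+1)) (by positivity) ?_
  rw [div_le_one (by positivity)]; linarith [Nat.cast_nonneg (α := ℝ) k]

lemma aux_measure_zero {n : ℕ} (s : ℝ) (hs : (n : ℝ) < s) (A : Set (Fin n → ℝ)) :
    packingMeasure s A = 0 := by
  refine le_antisymm ?_ zero_le
  have hcov : A ⊆ ⋃ i : ℕ, closedBall (0 : Fin n → ℝ) i := by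
    intro x _
    obtain ⟨i, hi⟩ := exists_nat_ge (dist x 0)
    exact Set.mem_iUnion.mpr ⟨i, mem_closedBall.mpr hi⟩
  calc packingMeasure s A ≤ ∑' i : ℕ, packingPremeasure s (closedBall (0 : Fin n → ℝ) i) := by
        rw [packingMeasure]
        exact iInf₂_le (fun i : ℕ => closedBall (0 : Fin n → ℝ) i) hcov
    _ = 0 := by simp [aux_premeasure_bounded s hs]

open Filter in
lemma aux_premeasure_top {n : ℕ} (s : ℝ) (hs0 : 0 ≤ s) (hsn : s < n)
    {E : Set (Fin n → ℝ)} {x : Fin n → ℝ} {ρ : ℝ} (hρ : 0 < ρ)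
    (hE : ball x ρ ⊆ closure E) : packingPremeasure s E = ⊤ := by
  rw [packingPremeasure, iInf_eq_top]
  intro δ
  rw [iInf_eq_top]
  intro hδ
  refine ENNReal.eq_top_of_forall_nnreal_le fun M => ?_
  -- asymptotics: find m ≥ 1 with ρ/(8m) ≤ δ and (2m+1)^n * (ρ/(4m))^s ≥ M
  have hV : Tendsto (fun m : ℕ => ((2*m+1 : ℕ) : ℝ) ^ n * (ρ / (4*m)) ^ s) atTop atTop := by
    have hW : Tendsto (fun m : ℕ => (ρ/4) ^ s * (m : ℝ) ^ ((n : ℝ) - s)) atTop atTop := by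
      have h1 : Tendsto (fun y : ℝ => y ^ ((n : ℝ) - s)) atTop atTop :=
        tendsto_rpow_atTop (by linarith)
      exact (h1.comp tendsto_natCast_atTop_atTop).const_mul_atTop
        (Real.rpow_pos_of_pos (by linarith) s)
    refine tendsto_atTop_mono' _ ?_ hW
    filter_upwards [eventually_ge_atTop 1] with m hm
    have hm0 : (0:ℝ) < m := by exact_mod_cast hm
    have hsplit : (ρ / (4*m)) ^ s = (ρ/4) ^ s * (m:ℝ) ^ (-s) := by
      rw [div_mul_eq_div_div, Real.div_rpow (by positivity) hm0.le, Real.rpow_neg hm0.le,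
        div_eq_mul_inv]
    have hpow : (m:ℝ) ^ ((n:ℝ) - s) = (m:ℝ) ^ n * (m:ℝ) ^ (-s) := by
      rw [sub_eq_add_neg, Real.rpow_add hm0, Real.rpow_natCast]
    rw [hsplit, hpow]
    have hle : (m:ℝ) ^ n ≤ ((2*m+1 : ℕ) : ℝ) ^ n := by
      gcongr
      push_cast; linarith
    calc (ρ/4) ^ s * ((m:ℝ) ^ n * (m:ℝ) ^ (-s))
        = (m:ℝ) ^ n * ((ρ/4) ^ s * (m:ℝ) ^ (-s)) := by ring
      _ ≤ ((2*m+1 : ℕ) : ℝ) ^ n * ((ρ/4) ^ s * (m:ℝ) ^ (-s)) := by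
          refine mul_le_mul_of_nonneg_right hle (by positivity)
  have hr : Tendsto (fun m : ℕ => ρ / (8*m)) atTop (nhds 0) := by
    have : Tendsto (fun m : ℕ => (8 * m : ℝ)) atTop atTop :=
      (tendsto_natCast_atTop_atTop (R := ℝ)).const_mul_atTop (by norm_num)
    exact Tendsto.div_atTop tendsto_const_nhds this
  obtain ⟨m, hm1, hmδ, hmM⟩ : ∃ m : ℕ, 1 ≤ m ∧ ρ / (8*m) ≤ δ ∧
      (M : ℝ) ≤ ((2*m+1 : ℕ) : ℝ) ^ n * (ρ / (4*m)) ^ s := by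
    have h1 : ∀ᶠ m : ℕ in atTop, 1 ≤ m := eventually_ge_atTop 1
    have h2 : ∀ᶠ m : ℕ in atTop, ρ / (8*m) ≤ δ :=
      hr.eventually (eventually_le_nhds hδ)
    have h3 : ∀ᶠ m : ℕ in atTop,
        (M : ℝ) ≤ ((2*m+1 : ℕ) : ℝ) ^ n * (ρ / (4*m)) ^ s :=
      hV.eventually_ge_atTop M
    exact ((h1.and (h2.and h3)).exists).imp fun m h => ⟨h.1, h.2.1, h.2.2⟩
  set r : ℝ := ρ / (8*m) with hrdef
  have hm0 : (0:ℝ) < m := by exact_mod_cast hm1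
  have hr0 : 0 < r := by positivity
  set K : Finset (Fin n → ℤ) := Fintype.piFinset fun _ => Finset.Icc (-(m:ℤ)) (m:ℤ) with hK
  set g : (Fin n → ℤ) → (Fin n → ℝ) := fun k i => x i + 4*r*(k i) with hg
  have hgi : ∀ k i, g k i = x i + 4*r*(k i) := fun k i => rfl
  have hgball : ∀ k ∈ K, g k ∈ ball x ρ := by
    intro k hk
    rw [mem_ball, dist_pi_lt_iff hρ]
    intro i
    have hki : |(k i : ℝ)| ≤ m := by
      have := Fintype.mem_piFinset.mp hk i
      rw [Finset.mem_Icc] at this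
      have : |k i| ≤ (m:ℤ) := abs_le.mpr this
      exact_mod_cast this
    have : dist (g k i) (x i) = 4*r*|(k i : ℝ)| := by
      rw [hgi, Real.dist_eq, show x i + 4*r*(k i) - x i = 4*r*((k i : ℝ)) by ring,
        abs_mul, abs_of_nonneg (by positivity : (0:ℝ) ≤ 4*r)]
    rw [this]
    calc 4*r*|(k i : ℝ)| ≤ 4*r*m := by
          exact mul_le_mul_of_nonneg_left hki (by positivity)
      _ = ρ/2 := by rw [hrdef]; field_simp; ring
      _ < ρ := by linarith
  have hex : ∀ k : Fin n → ℤ, k ∈ K → ∃ y, y ∈ E ∧ dist (g k) y < r/2 := by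
    intro k hk
    have : g k ∈ closure E := hE (hgball k hk)
    exact Metric.mem_closure_iff.mp this (r/2) (by positivity)
  choose! e he hd using hex
  have hgsep : ∀ k k' : Fin n → ℤ, k ≠ k' → 4*r ≤ dist (g k) (g k') := by
    intro k k' hne
    obtain ⟨i, hi⟩ := Function.ne_iff.mp hne
    refine le_trans ?_ (dist_le_pi_dist (g k) (g k') i)
    have : dist (g k i) (g k' i) = 4*r*|((k i : ℝ)) - (k' i : ℝ)| := by
      rw [hgi, hgi, Real.dist_eq,
        show x i + 4*r*(k i) - (x i + 4*r*(k' i)) = 4*r*((k i : ℝ) - (k' i : ℝ)) by ring,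
        abs_mul, abs_of_nonneg (by positivity : (0:ℝ) ≤ 4*r)]
    rw [this]
    have h1 : (1:ℝ) ≤ |((k i : ℝ)) - (k' i : ℝ)| := by
      have h := Int.one_le_abs (sub_ne_zero.mpr hi)
      have h2 : ((1:ℤ):ℝ) ≤ ((|k i - k' i| : ℤ) : ℝ) := by exact_mod_cast h
      simpa [Int.cast_abs] using h2
    nlinarith
  have hsep : ∀ k ∈ K, ∀ k' ∈ K, k ≠ k' → 3*r ≤ dist (e k) (e k') := by
    intro k hk k' hk' hne
    have h1 := hd k hk
    have h2 := hd k' hk'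
    have h3 := hgsep k k' hne
    have h4 := dist_triangle (g k) (e k) (g k')
    have h5 := dist_triangle (e k) (e k') (g k')
    have h6 : dist (e k') (g k') = dist (g k') (e k') := dist_comm _ _
    have h7 : dist (g k) (e k) = dist (e k) (g k) := dist_comm _ _
    nlinarith [dist_triangle (g k) (e k) (e k'), dist_triangle (g k) (e k') (g k'),
      dist_comm (e k') (g k')]
  have hinj : Set.InjOn (fun k => (e k, r)) K := by
    intro k hk k' hk' heq
    by_contra hne
    have h3 := hsep k hk k' hk' hne
    have he' : e k = e k' := congrArg Prod.fst heq
    rw [he', dist_self] at h3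
    linarith
  set t : Finset ((Fin n → ℝ) × ℝ) := K.image fun k => (e k, r) with ht
  have hcond : (∀ p ∈ t, p.1 ∈ E ∧ 0 < p.2 ∧ p.2 ≤ δ) ∧
      (t : Set ((Fin n → ℝ) × ℝ)).Pairwise fun p q =>
        Disjoint (closedBall p.1 p.2) (closedBall q.1 q.2) := by
    constructor
    · intro p hp
      obtain ⟨k, hk, rfl⟩ := Finset.mem_image.mp hp
      exact ⟨he k hk, hr0, hmδ⟩
    · intro p hp q hq hne
      obtain ⟨k, hk, rfl⟩ := Finset.mem_image.mp hp
      obtain ⟨k', hk', rfl⟩ := Finset.mem_image.mp hq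
      have hkk' : k ≠ k' := fun h => hne (by rw [h])
      refine closedBall_disjoint_closedBall ?_
      have := hsep k hk k' hk' hkk'
      simp only
      linarith
  refine le_trans ?_ (le_iSup_of_le t (le_iSup_of_le hcond le_rfl))
  have hsum : ∑ p ∈ t, ENNReal.ofReal ((2 * p.2) ^ s)
      = (K.card : ENNReal) * ENNReal.ofReal ((2 * r) ^ s) := by
    rw [ht, Finset.sum_image fun k hk k' hk' h => hinj hk hk' h]
    simp [Finset.sum_const, nsmul_eq_mul]
  have hcard : (K.card : ℕ) = (2*m+1) ^ n := by
    rw [hK, Fintype.card_piFinset]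
    have hI : (Finset.Icc (-(m:ℤ)) (m:ℤ)).card = 2*m+1 := by
      rw [Int.card_Icc]; omega
    simp [hI]
  rw [hsum, hcard]
  have : ((((2*m+1)^n : ℕ) : ENNReal)) * ENNReal.ofReal ((2 * r) ^ s)
      = ENNReal.ofReal (((2*m+1 : ℕ) : ℝ) ^ n * (2 * r) ^ s) := by
    rw [ENNReal.ofReal_mul (by positivity)]
    congr 1
    rw [← ENNReal.ofReal_natCast]
    push_cast
    ring_nf
  rw [this]
  have h2r : 2 * r = ρ / (4*m) := by rw [hrdef]; field_simp; ring
  rw [h2r]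
  calc (M : ENNReal) = ENNReal.ofReal (M : ℝ) := ENNReal.ofReal_coe_nnreal.symm
    _ ≤ _ := ENNReal.ofReal_le_ofReal hmM

lemma aux_residual (n : ℕ) :
    {x : Fin n → ℝ | ∀ i, Liouville (x i)} ∈ residual (Fin n → ℝ) := by
  have heq : {x : Fin n → ℝ | ∀ i, Liouville (x i)}
      = ⋂ i, (fun x : Fin n → ℝ => x i) ⁻¹' {y | Liouville y} := by
    ext x; simp
  rw [heq, Filter.iInter_mem]
  intro i
  have hGδ : IsGδ ((fun x : Fin n → ℝ => x i) ⁻¹' {y | Liouville y}) := by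
    obtain ⟨T, hTo, hTc, hTeq⟩ := IsGδ.setOf_liouville
    rw [hTeq, Set.preimage_sInter]
    exact .biInter hTc fun t ht => ((hTo t ht).preimage (continuous_apply i)).isGδ
  refine residual_of_dense_Gδ hGδ ?_
  rw [Metric.dense_iff]
  intro y ε hε
  obtain ⟨l, hl, hld⟩ := Metric.mem_closure_iff.mp (dense_liouville (y i)) ε hε
  refine ⟨Function.update y i l, ?_, ?_⟩
  · rw [mem_ball, dist_pi_lt_iff hε]
    intro j
    rcases eq_or_ne j i with rfl | hj
    · simpa [Function.update_self, dist_comm] using hld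
    · simp [Function.update_of_ne hj, hε]
  · simpa [Function.update_self] using hl

/-- For any integer `n ≥ 1`, the `n`-fold Cartesian product of the set of
Liouville numbers has packing dimension exactly `n`. -/
theorem packingDim_liouville_pi (n : ℕ) (hn : 1 ≤ n) :
    packingDim {x : Fin n → ℝ | ∀ i, Liouville (x i)} = (n : ENNReal) := by
  set A := {x : Fin n → ℝ | ∀ i, Liouville (x i)} with hA
  refine le_antisymm ?_ ?_
  · refine ENNReal.le_of_forall_pos_le_add fun ε hε _ => ?_
    have hmeas : packingMeasure (((n : NNReal) + ε : NNReal) : ℝ) A = 0 := by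
      refine aux_measure_zero _ ?_ A
      push_cast
      have : (0:ℝ) < ε := hε
      linarith
    calc packingDim A ≤ (((n : NNReal) + ε : NNReal) : ENNReal) := by
          rw [packingDim]; exact iInf₂_le ((n : NNReal) + ε) hmeas
      _ = (n : ENNReal) + ε := by push_cast; ring
  · rw [packingDim]
    refine le_iInf₂ fun s hs => ?_
    by_contra hlt
    push_neg at hlt
    have hsn : (s:ℝ) < n := by exact_mod_cast hlt
    rw [packingMeasure] at hs
    have h1 : (⨅ (E : ℕ → Set (Fin n → ℝ)) (_ : A ⊆ ⋃ i, E i),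
        ∑' i, packingPremeasure s (E i)) < 1 := hs ▸ zero_lt_one
    obtain ⟨E, hE⟩ := iInf_lt_iff.mp h1
    obtain ⟨hcov, hsum⟩ := iInf_lt_iff.mp hE
    have hball : ∃ i, ∃ z, ∃ ρ > 0, ball z ρ ⊆ closure (E i) := by
      by_contra hni
      push_neg at hni
      have hmeag : IsMeagre (⋃ i, closure (E i)) := by
        refine isMeagre_iUnion fun i => ?_
        rw [IsMeagre]
        have hnd : IsNowhereDense (closure (E i)) := by
          rw [IsNowhereDense, closure_closure]
          by_contra hne
          obtain ⟨z, hz⟩ := Set.nonempty_iff_ne_empty.mpr hne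
          obtain ⟨ρ, hρ, hb⟩ := Metric.isOpen_iff.mp isOpen_interior z hz
          exact hni i z ρ hρ (hb.trans interior_subset)
        have hclosed : IsClosed (closure (E i)) := isClosed_closure
        have := (isClosed_isNowhereDense_iff_compl.mp ⟨hclosed, hnd⟩)
        exact residual_of_dense_Gδ this.1.isGδ this.2
      have hsub : A ⊆ ⋃ i, closure (E i) :=
        hcov.trans (Set.iUnion_mono fun i => subset_closure)
      have hmem : A ∩ (⋃ i, closure (E i))ᶜ ∈ residual (Fin n → ℝ) :=
        Filter.inter_mem (aux_residual n) hmeag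
      obtain ⟨z, hz1, hz2⟩ := (dense_of_mem_residual hmem).nonempty
      exact hz2 (hsub hz1)
    obtain ⟨i, z, ρ, hρ, hball⟩ := hball
    have htop : packingPremeasure s (E i) = ⊤ :=
      aux_premeasure_top s s.coe_nonneg hsn hρ hball
    have hle : (⊤ : ENNReal) ≤ ∑' i, packingPremeasure s (E i) := by
      rw [← htop]
      exact ENNReal.le_tsum i
    rw [top_le_iff.mp hle] at hsum
    exact absurd hsum (by simp)
end

section
/- If ξ is real and p/q is a rational number in lowest terms with q ≥ 1 satisfying |ξ - p/q| < 1/(2q²), then p/q is a convergent of the continued fraction expansion of ξ (Legendre's theorem). -/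
/-- Legendre's theorem: if `p/q` is in lowest terms with `q ≥ 1` and
`|ξ - p/q| < 1/(2q²)`, then `p/q` is a convergent of the continued fraction
expansion of `ξ`. -/
theorem legendre_convergent (ξ : ℝ) (p : ℤ) (q : ℕ) (hq : 1 ≤ q)
    (hcop : p.natAbs.Coprime q)
    (happrox : |ξ - (p : ℝ) / q| < 1 / (2 * (q : ℝ) ^ 2)) :
    ∃ k : ℕ, (GenContFract.of ξ).convs k = (p : ℝ) / q := by
  have hq0 : q ≠ 0 := by omega
  set r : ℚ := ⟨p, q, hq0, hcop⟩ with hr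
  have hden : r.den = q := rfl
  have hrv : (r : ℚ) = (p : ℚ) / q := by
    rw [hr, Rat.mk_eq_divInt, Rat.divInt_eq_div]; norm_cast
  have hcast : ((r : ℚ) : ℝ) = (p : ℝ) / q := by
    rw [hrv]; push_cast; ring
  have := Real.exists_convs_eq_rat (ξ := ξ) (q := r) (by rw [hden, hcast]; exact happrox)
  obtain ⟨n, hn⟩ := this
  exact ⟨n, by rw [hn, hcast]⟩
end

section
/- For λ₀, λ₁ ∈ ((5+√17)/2, ∞], the product 𝒲_{λ₀} × 𝒲_{λ₁} has Hausdorff dimension at most 1 + 2/max{λ₀, λ₁}. -/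
open MeasureTheory MeasureTheory.Measure Pointwise Set Filter ENNReal Topology

/-- The irrationality exponent of a real number `ξ`, as an extended nonnegative
real: the supremum of all `μ ≥ 0` such that `|ξ - p/q| ≤ q^{-μ}` holds for
infinitely many rational numbers `p/q`. -/
noncomputable def irrExp (ξ : ℝ) : ENNReal :=
  sSup (ENNReal.ofReal ''
    {μ : ℝ | {r : ℚ | |ξ - (r : ℝ)| ≤ (r.den : ℝ) ^ (-μ)}.Infinite})

/-- The set `𝒲_λ` of real numbers with irrationality exponent exactly `λ`. -/
def Wexact (lam : ENNReal) : Set ℝ := {ξ : ℝ | irrExp ξ = lam}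

/-- The set `𝒲_{λ;μ}` of real numbers with irrationality exponent in `[λ, μ]`. -/
def Wrange (lam mu : ENNReal) : Set ℝ := {ξ : ℝ | lam ≤ irrExp ξ ∧ irrExp ξ ≤ mu}

/-- The limsup set of well-approximable numbers at exponent `μ`. -/
def Wlim (μ : ℝ) : Set ℝ := {ξ : ℝ | {r : ℚ | |ξ - (r : ℝ)| ≤ (r.den : ℝ) ^ (-μ)}.Infinite}

lemma Wexact_subset_Wlim {lam : ENNReal} {μ : ℝ} (h : ENNReal.ofReal μ < lam) :
    Wexact lam ⊆ Wlim μ := by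
  intro ξ hξ
  have hlt : ENNReal.ofReal μ < irrExp ξ := by rw [hξ]; exact h
  rw [irrExp, lt_sSup_iff] at hlt
  obtain ⟨a, ⟨μ', hμ'S, rfl⟩, hlt⟩ := hlt
  have hμμ' : μ ≤ μ' := by
    by_contra h'
    exact absurd (ENNReal.ofReal_le_ofReal (le_of_not_ge h')) (not_le.2 hlt)
  refine hμ'S.mono fun r hr => ?_
  refine le_trans hr (Real.rpow_le_rpow_of_exponent_le ?_ (neg_le_neg hμμ'))
  exact_mod_cast r.pos

lemma finite_rat_den_le (Q : ℕ) (C : ℝ) : {r : ℚ | r.den ≤ Q ∧ |(r : ℝ)| ≤ C}.Finite := by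
  have habs : ∀ r : ℚ, |((r.num : ℤ) : ℝ)| = |(r : ℝ)| * r.den := by
    intro r
    rw [Rat.cast_def]  -- (r:ℝ) = num / den
    rw [abs_div, abs_of_nonneg (by positivity : (0:ℝ) ≤ (r.den : ℝ)),
      div_mul_cancel₀ _ (by exact_mod_cast r.pos.ne' : (r.den : ℝ) ≠ 0)]
  apply Set.Finite.of_finite_image (f := fun r : ℚ => (r.num, r.den))
  · apply Set.Finite.subset ((Set.finite_Icc (-⌈|C| * Q⌉) ⌈|C| * Q⌉).prod (Set.finite_Icc 0 Q))
    rintro ⟨a, q⟩ ⟨r, ⟨hden, habs'⟩, heq⟩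
    obtain ⟨rfl, rfl⟩ : r.num = a ∧ r.den = q := by
      simpa [Prod.ext_iff] using heq
    have h1 : |((r.num : ℤ) : ℝ)| ≤ |C| * Q := by
      rw [habs r]
      have h2 : |(r : ℝ)| ≤ |C| := le_trans habs' (le_abs_self C)
      calc |(r : ℝ)| * r.den ≤ |C| * r.den := by
            apply mul_le_mul_of_nonneg_right h2 (by positivity)
        _ ≤ |C| * Q := by
            apply mul_le_mul_of_nonneg_left ?_ (abs_nonneg C)
            exact_mod_cast hden
    have h3 : |r.num| ≤ ⌈|C| * Q⌉ := by
      have h4 : ((|r.num| : ℤ) : ℝ) ≤ ⌈|C| * Q⌉ := by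
        calc ((|r.num| : ℤ) : ℝ) ≤ |C| * Q := by exact_mod_cast h1
          _ ≤ ⌈|C| * Q⌉ := Int.le_ceil _
      exact_mod_cast h4
    constructor
    · exact ⟨neg_le_of_abs_le h3, le_of_abs_le h3⟩
    · exact ⟨Nat.zero_le _, hden⟩
  · intro r _ r' _ h
    simp only [Prod.mk.injEq] at h
    exact Rat.ext h.1 h.2

lemma exists_good_rat {μ : ℝ} (hμ : 0 ≤ μ) {ξ : ℝ}
    (hξ : {r : ℚ | |ξ - (r : ℝ)| ≤ (r.den : ℝ) ^ (-μ)}.Infinite) {N : ℝ} (hN : |ξ| ≤ N)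
    (Q : ℕ) :
    ∃ r : ℚ, Q ≤ r.den ∧ |(r : ℝ)| ≤ N + 1 ∧ |ξ - (r : ℝ)| ≤ (r.den : ℝ) ^ (-μ) := by
  set S := {r : ℚ | |ξ - (r : ℝ)| ≤ (r.den : ℝ) ^ (-μ)} with hS
  have hb : ∀ r ∈ S, |(r : ℝ)| ≤ N + 1 := by
    intro r hr
    have h1 : (r.den : ℝ) ^ (-μ) ≤ 1 :=
      Real.rpow_le_one_of_one_le_of_nonpos (by exact_mod_cast r.pos) (neg_nonpos.2 hμ)
    calc |(r : ℝ)| = |ξ - (ξ - (r : ℝ))| := by ring_nf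
      _ ≤ |ξ| + |ξ - (r : ℝ)| := abs_sub _ _
      _ ≤ N + 1 := add_le_add hN (le_trans hr h1)
  have hfin : (S ∩ {r : ℚ | r.den < Q}).Finite := by
    apply (finite_rat_den_le Q (N + 1)).subset
    rintro r ⟨hrS, hrd⟩
    exact ⟨hrd.le, hb r hrS⟩
  obtain ⟨r, hrS, hrQ⟩ : (S \ {r : ℚ | r.den < Q}).Nonempty := by
    have : (S \ (S ∩ {r : ℚ | r.den < Q})).Infinite := hξ.diff hfin
    refine this.nonempty.imp fun r hr => ?_
    exact ⟨hr.1, fun h => hr.2 ⟨hr.1, h⟩⟩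
  exact ⟨r, not_lt.1 hrQ, hb r hrS, hrS⟩

lemma diam_prod_le (A B : Set ℝ) :
    Metric.ediam (A ×ˢ B) ≤ max (Metric.ediam A) (Metric.ediam B) := by
  apply EMetric.diam_le
  rintro ⟨x1, x2⟩ ⟨hx1, hx2⟩ ⟨y1, y2⟩ ⟨hy1, hy2⟩
  rw [Prod.edist_eq]
  exact max_le_max (EMetric.edist_le_diam_of_mem hx1 hy1)
    (EMetric.edist_le_diam_of_mem hx2 hy2)

set_option maxHeartbeats 1000000 in
lemma core_measure_zero {μ s : ℝ} (hμ3 : 3 ≤ μ) (hs : 2 / μ < s) (N : ℕ) :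
    μH[(1 + s : ℝ)] ((Icc (-(N:ℝ)) N) ×ˢ (Wlim μ ∩ Icc (-(N:ℝ)) N)) = 0 := by
  have hμ0 : (0:ℝ) < μ := by linarith
  have hs0 : (0:ℝ) < s := lt_trans (by positivity) hs
  have hd0 : (0:ℝ) < 1 + s := by linarith
  have hμs : 2 < μ * s := by
    have := (div_lt_iff₀ hμ0).1 hs
    linarith [this]
  -- the radius function
  set ρ : ℚ → ℝ := fun r => (r.den : ℝ) ^ (-μ) with hρ
  have hρpos : ∀ r : ℚ, 0 < ρ r := fun r =>
    Real.rpow_pos_of_pos (by exact_mod_cast r.pos) _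
  -- the covers
  set t : ℕ → ℚ × ℕ → Set (ℝ × ℝ) := fun Q p =>
    if (Q ≤ p.1.den ∧ |(p.1 : ℝ)| ≤ (N:ℝ) + 1 ∧ (p.2 : ℝ) * ρ p.1 ≤ 2 * N)
    then (Icc (-(N:ℝ) + p.2 * ρ p.1) (-(N:ℝ) + (p.2 + 1) * ρ p.1)) ×ˢ
      (Icc ((p.1 : ℝ) - ρ p.1) ((p.1 : ℝ) + ρ p.1))
    else ∅ with ht_def
  set rQ : ℕ → ℝ≥0∞ := fun Q => ENNReal.ofReal (2 * (Q:ℝ) ^ (-μ)) with hrQ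
  have hr : Tendsto rQ atTop (𝓝 0) := by
    have h1 : Tendsto (fun Q : ℕ => 2 * (Q:ℝ) ^ (-μ)) atTop (𝓝 (2 * 0)) :=
      Tendsto.const_mul 2 ((tendsto_rpow_neg_atTop hμ0).comp tendsto_natCast_atTop_atTop)
    rw [mul_zero] at h1
    have h2 := ENNReal.tendsto_ofReal (a := (0:ℝ)) h1
    rw [ENNReal.ofReal_zero] at h2
    exact h2
  have ht : ∀ᶠ Q in atTop, ∀ i, EMetric.diam (t Q i) ≤ rQ Q := by
    filter_upwards [eventually_ge_atTop 1] with Q hQ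
    rintro ⟨r, j⟩
    rw [ht_def]
    dsimp only
    split_ifs with hc
    · refine le_trans (diam_prod_le _ _) ?_
      rw [Real.ediam_Icc, Real.ediam_Icc]
      have hρQ : ρ r ≤ (Q:ℝ) ^ (-μ) := by
        apply Real.rpow_le_rpow_of_nonpos (by exact_mod_cast hQ) (by exact_mod_cast hc.1)
        linarith
      have e1 : (-(N:ℝ) + (j + 1) * ρ r) - (-(N:ℝ) + j * ρ r) = ρ r := by ring
      have e2 : ((r : ℝ) + ρ r) - ((r : ℝ) - ρ r) = 2 * ρ r := by ring
      rw [e1, e2, hrQ]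
      apply max_le
      · exact ENNReal.ofReal_le_ofReal (by nlinarith [hρpos r])
      · exact ENNReal.ofReal_le_ofReal (by nlinarith)
    · rw [show EMetric.diam (∅ : Set (ℝ × ℝ)) = 0 from Metric.ediam_empty]; simp
  have hst : ∀ᶠ Q in atTop, (Icc (-(N:ℝ)) N) ×ˢ (Wlim μ ∩ Icc (-(N:ℝ)) N) ⊆
      ⋃ i, t Q i := by
    apply Eventually.of_forall
    intro Q
    rintro ⟨x, ξ⟩ ⟨hx, hξW, hξI⟩
    obtain ⟨r, hrQ', hrN, hrapp⟩ :=
      exists_good_rat hμ0.le hξW (abs_le.2 ⟨hξI.1, hξI.2⟩) Q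
    have hxN : 0 ≤ x + N := by linarith [hx.1]
    set j : ℕ := ⌊(x + N) / ρ r⌋₊ with hj
    have hj1 : (j : ℝ) * ρ r ≤ x + N := by
      have h := Nat.floor_le (div_nonneg hxN (hρpos r).le)
      calc (j:ℝ) * ρ r ≤ ((x + N) / ρ r) * ρ r :=
            mul_le_mul_of_nonneg_right h (hρpos r).le
        _ = x + N := div_mul_cancel₀ _ (hρpos r).ne'
    have hj2 : x + N < ((j : ℝ) + 1) * ρ r := by
      have h := Nat.lt_floor_add_one ((x + N) / ρ r)
      exact (div_lt_iff₀ (hρpos r)).1 h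
    refine mem_iUnion.2 ⟨(r, j), ?_⟩
    rw [ht_def]
    dsimp only
    rw [if_pos ⟨hrQ', hrN, by linarith [hx.2]⟩]
    have habs := abs_le.1 hrapp
    constructor
    · constructor <;> [linarith; linarith]
    · constructor <;> [linarith [habs.1, habs.2]; linarith [habs.1, habs.2]]
  have hμH := hausdorffMeasure_le_liminf_tsum (1 + s)
    ((Icc (-(N:ℝ)) N) ×ˢ (Wlim μ ∩ Icc (-(N:ℝ)) N)) rQ hr t ht hst
  -- the comparison series
  set g₁ : ℕ → ℝ := fun q => (2 * N + 1) * (q:ℝ) ^ μ * (2 * (q:ℝ) ^ (-μ)) ^ (1 + s)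
    with hg₁
  set c : ℕ → ℝ := fun q => (2 * N + 3) * q * g₁ q with hc
  set f : ℕ → ℝ≥0∞ := fun q => ENNReal.ofReal (c q) with hf
  have hg₁nonneg : ∀ q, 0 ≤ g₁ q := by
    intro q; rw [hg₁]; positivity
  have hcnonneg : ∀ q, 0 ≤ c q := by
    intro q; rw [hc]; dsimp only; positivity
  have hexp : 1 - μ * s < -1 := by linarith
  have hcsum : Summable c := by
    refine Summable.of_nonneg_of_le hcnonneg (fun q => ?_)
      ((Real.summable_nat_rpow.2 hexp).mul_left ((2 * (N:ℝ) + 3) * ((2 * (N:ℝ) + 1) * 2 ^ (1 + s))))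
    · show c q ≤ ((2 * (N:ℝ) + 3) * ((2 * (N:ℝ) + 1) * 2 ^ (1 + s))) * (q:ℝ) ^ (1 - μ * s)
      apply le_of_eq
      rcases Nat.eq_zero_or_pos q with rfl | hq
      · simp only [hc, hg₁, Nat.cast_zero, mul_zero, zero_mul]
        rw [Real.zero_rpow (by linarith : (1:ℝ) - μ * s ≠ 0)]
        simp
      · have hq1 : (1:ℝ) ≤ (q:ℝ) := by exact_mod_cast hq
        have hq0 : (0:ℝ) < (q:ℝ) := by linarith
        have e1 : (2 * (q:ℝ) ^ (-μ)) ^ (1 + s) = 2 ^ (1 + s) * ((q:ℝ) ^ (-μ)) ^ (1 + s) :=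
          Real.mul_rpow (by norm_num) (Real.rpow_nonneg hq0.le _)
        have e2 : ((q:ℝ) ^ (-μ)) ^ (1 + s) = (q:ℝ) ^ (-μ * (1 + s)) :=
          (Real.rpow_mul hq0.le _ _).symm
        have e3 : (q:ℝ) = (q:ℝ) ^ (1:ℝ) := (Real.rpow_one _).symm
        have e4 : (q:ℝ) ^ (1:ℝ) * ((q:ℝ) ^ μ * (q:ℝ) ^ (-μ * (1 + s)))
            = (q:ℝ) ^ (1 - μ * s) := by
          rw [← Real.rpow_add hq0, ← Real.rpow_add hq0]
          congr 1
          ring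
        calc c q = (2 * N + 3) * q * ((2 * N + 1) * (q:ℝ) ^ μ * (2 * (q:ℝ) ^ (-μ)) ^ (1 + s)) := rfl
          _ = ((2 * N + 3) * ((2 * N + 1) * 2 ^ (1 + s))) *
              ((q:ℝ) ^ (1:ℝ) * ((q:ℝ) ^ μ * (q:ℝ) ^ (-μ * (1 + s)))) := by
              rw [e1, e2, ← e3]; ring
          _ = ((2 * N + 3) * ((2 * N + 1) * 2 ^ (1 + s))) * (q:ℝ) ^ (1 - μ * s) := by rw [e4]
  have hfin : (∑' q, f q) ≠ ⊤ := by
    rw [hf]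
    rw [← ENNReal.ofReal_tsum_of_nonneg hcnonneg hcsum]
    exact ENNReal.ofReal_ne_top
  -- the main bound for each Q ≥ 1
  have hsum : ∀ Q : ℕ, 1 ≤ Q →
      (∑' i : ℚ × ℕ, EMetric.diam (t Q i) ^ (1 + s)) ≤ ∑' k, f (k + Q) := by
    intro Q hQ1
    rw [ENNReal.tsum_prod']
    have step1 : ∀ r : ℚ, (∑' j : ℕ, EMetric.diam (t Q (r, j)) ^ (1 + s)) ≤
        (if Q ≤ r.den ∧ |(r:ℝ)| ≤ (N:ℝ) + 1 then ENNReal.ofReal (g₁ r.den) else 0) := by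
      intro r
      by_cases hc2 : Q ≤ r.den ∧ |(r:ℝ)| ≤ (N:ℝ) + 1
      · rw [if_pos hc2]
        have hq1 : (1:ℝ) ≤ (r.den:ℝ) := by exact_mod_cast r.pos
        have hqμ1 : (1:ℝ) ≤ (r.den:ℝ) ^ μ := Real.one_le_rpow hq1 hμ0.le
        set M : ℕ := ⌊2 * (N:ℝ) * (r.den:ℝ) ^ μ⌋₊ + 1 with hM
        have hterm : ∀ j : ℕ, EMetric.diam (t Q (r, j)) ^ (1 + s) ≤
            (if j ∈ Finset.range M then ENNReal.ofReal ((2 * ρ r) ^ (1 + s)) else 0) := by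
          intro j
          by_cases hj : (j:ℝ) * ρ r ≤ 2 * N
          · have hjM : j ∈ Finset.range M := by
              rw [Finset.mem_range, hM]
              have hjle : (j:ℝ) ≤ 2 * N * (r.den:ℝ) ^ μ := by
                have hinv : ρ r * (r.den:ℝ) ^ μ = 1 := by
                  rw [hρ]
                  dsimp only
                  rw [← Real.rpow_add (by linarith), neg_add_cancel, Real.rpow_zero]
                calc (j:ℝ) = (j:ℝ) * (ρ r * (r.den:ℝ) ^ μ) := by rw [hinv, mul_one]
                  _ = ((j:ℝ) * ρ r) * (r.den:ℝ) ^ μ := by ring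
                  _ ≤ (2 * N) * (r.den:ℝ) ^ μ :=
                    mul_le_mul_of_nonneg_right hj (by positivity)
              exact Nat.lt_succ_of_le (Nat.le_floor hjle)
            rw [if_pos hjM]
            have hdiam : EMetric.diam (t Q (r, j)) ≤ ENNReal.ofReal (2 * ρ r) := by
              rw [ht_def]
              dsimp only
              rw [if_pos ⟨hc2.1, hc2.2, hj⟩]
              refine le_trans (diam_prod_le _ _) ?_
              rw [Real.ediam_Icc, Real.ediam_Icc]
              apply max_le
              · exact ENNReal.ofReal_le_ofReal (by nlinarith [hρpos r])
              · exact ENNReal.ofReal_le_ofReal (by nlinarith [hρpos r])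
            calc EMetric.diam (t Q (r, j)) ^ (1 + s)
                ≤ (ENNReal.ofReal (2 * ρ r)) ^ (1 + s) :=
                  ENNReal.rpow_le_rpow hdiam hd0.le
              _ = ENNReal.ofReal ((2 * ρ r) ^ (1 + s)) :=
                  ENNReal.ofReal_rpow_of_pos (by positivity)
          · have hempty : t Q (r, j) = ∅ := by
              rw [ht_def]
              dsimp only
              rw [if_neg (by tauto)]
            rw [hempty]
            rw [show EMetric.diam (∅ : Set (ℝ × ℝ)) = 0 from Metric.ediam_empty]
            rw [ENNReal.zero_rpow_of_pos hd0]
            exact zero_le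
        calc (∑' j : ℕ, EMetric.diam (t Q (r, j)) ^ (1 + s))
            ≤ ∑' j : ℕ, (if j ∈ Finset.range M then ENNReal.ofReal ((2 * ρ r) ^ (1 + s)) else 0) :=
              ENNReal.tsum_le_tsum hterm
          _ = ∑ j ∈ Finset.range M, ENNReal.ofReal ((2 * ρ r) ^ (1 + s)) := by
              rw [tsum_eq_sum (s := Finset.range M) (fun b hb => if_neg hb)]
              exact Finset.sum_congr rfl fun b hb => if_pos hb
          _ = (M : ℝ≥0∞) * ENNReal.ofReal ((2 * ρ r) ^ (1 + s)) := by
              rw [Finset.sum_const, Finset.card_range, nsmul_eq_mul]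
          _ = ENNReal.ofReal ((M : ℝ) * (2 * ρ r) ^ (1 + s)) := by
              rw [ENNReal.ofReal_mul (by positivity), ENNReal.ofReal_natCast]
          _ ≤ ENNReal.ofReal (g₁ r.den) := by
              apply ENNReal.ofReal_le_ofReal
              have hMle : (M : ℝ) ≤ (2 * N + 1) * (r.den:ℝ) ^ μ := by
                rw [hM]
                push_cast
                have := Nat.floor_le (by positivity : (0:ℝ) ≤ 2 * (N:ℝ) * (r.den:ℝ) ^ μ)
                nlinarith
              rw [hg₁]
              dsimp only
              have : (0:ℝ) ≤ (2 * ρ r) ^ (1 + s) := by positivity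
              rw [hρ] at *
              nlinarith
      · rw [if_neg hc2]
        have : ∀ j : ℕ, EMetric.diam (t Q (r, j)) ^ (1 + s) = 0 := by
          intro j
          have hempty : t Q (r, j) = ∅ := by
            rw [ht_def]
            dsimp only
            rw [if_neg (by tauto)]
          rw [hempty]
          rw [show EMetric.diam (∅ : Set (ℝ × ℝ)) = 0 from Metric.ediam_empty]
          exact ENNReal.zero_rpow_of_pos hd0
        rw [tsum_congr this]
        simp
    have step2 : (∑' r : ℚ, ∑' j : ℕ, EMetric.diam (t Q (r, j)) ^ (1 + s)) ≤
        ∑' p : ℕ × ℤ, (if Q ≤ p.1 ∧ |(p.2:ℝ)| ≤ ((N:ℝ) + 1) * p.1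
          then ENNReal.ofReal (g₁ p.1) else 0) := by
      refine le_trans (ENNReal.tsum_le_tsum step1) ?_
      have hinj : Function.Injective (fun r : ℚ => ((r.den, r.num) : ℕ × ℤ)) := by
        intro a b h
        simp only [Prod.mk.injEq] at h
        exact Rat.ext h.2 h.1
      refine le_trans ?_ (ENNReal.tsum_comp_le_tsum_of_injective hinj _)
      apply ENNReal.tsum_le_tsum
      intro r
      dsimp only
      by_cases hc2 : Q ≤ r.den ∧ |(r:ℝ)| ≤ (N:ℝ) + 1
      · rw [if_pos hc2, if_pos]
        refine ⟨hc2.1, ?_⟩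
        have habs : |((r.num : ℤ) : ℝ)| = |(r : ℝ)| * r.den := by
          rw [Rat.cast_def, abs_div, abs_of_nonneg (by positivity : (0:ℝ) ≤ (r.den : ℝ)),
            div_mul_cancel₀ _ (by exact_mod_cast r.pos.ne' : (r.den : ℝ) ≠ 0)]
        rw [habs]
        apply mul_le_mul_of_nonneg_right hc2.2 (by positivity)
      · rw [if_neg hc2]
        exact zero_le
    have step3 : (∑' p : ℕ × ℤ, (if Q ≤ p.1 ∧ |(p.2:ℝ)| ≤ ((N:ℝ) + 1) * p.1
          then ENNReal.ofReal (g₁ p.1) else 0)) ≤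
        ∑' q : ℕ, (if Q ≤ q then f q else 0) := by
      rw [ENNReal.tsum_prod']
      apply ENNReal.tsum_le_tsum
      intro q
      by_cases hq : Q ≤ q
      · rw [if_pos hq]
        have hq1 : 1 ≤ q := le_trans hQ1 hq
        set m : ℕ := (N + 1) * q with hm
        have hsupp : ∀ a : ℤ, a ∉ Finset.Icc (-(m:ℤ)) (m:ℤ) →
            (if Q ≤ q ∧ |(a:ℝ)| ≤ ((N:ℝ) + 1) * q then ENNReal.ofReal (g₁ q) else 0) = 0 := by
          intro a ha
          rw [if_neg]
          rintro ⟨-, habs⟩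
          apply ha
          rw [Finset.mem_Icc, ← abs_le]
          have : |(a:ℝ)| ≤ ((m:ℕ):ℝ) := by
            rw [hm]
            push_cast
            linarith
          exact_mod_cast this
        calc (∑' a : ℤ, (if Q ≤ q ∧ |(a:ℝ)| ≤ ((N:ℝ) + 1) * q then ENNReal.ofReal (g₁ q) else 0))
            = ∑ a ∈ Finset.Icc (-(m:ℤ)) (m:ℤ),
              (if Q ≤ q ∧ |(a:ℝ)| ≤ ((N:ℝ) + 1) * q then ENNReal.ofReal (g₁ q) else 0) :=
              tsum_eq_sum hsupp
          _ ≤ ∑ a ∈ Finset.Icc (-(m:ℤ)) (m:ℤ), ENNReal.ofReal (g₁ q) := by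
              apply Finset.sum_le_sum
              intro a _
              split_ifs <;> simp
          _ = ((Finset.Icc (-(m:ℤ)) (m:ℤ)).card : ℝ≥0∞) * ENNReal.ofReal (g₁ q) := by
              rw [Finset.sum_const, nsmul_eq_mul]
          _ ≤ ENNReal.ofReal (c q) := by
              have hcard : (Finset.Icc (-(m:ℤ)) (m:ℤ)).card = 2 * m + 1 := by
                rw [Int.card_Icc]
                omega
              rw [hcard, ← ENNReal.ofReal_natCast (2 * m + 1), ← ENNReal.ofReal_mul (by positivity)]
              apply ENNReal.ofReal_le_ofReal
              have hmle : ((2 * m + 1 : ℕ) : ℝ) ≤ (2 * N + 3) * q := by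
                rw [hm]
                push_cast
                have : (1:ℝ) ≤ (q:ℝ) := by exact_mod_cast hq1
                nlinarith
              rw [hc]
              dsimp only
              nlinarith [hg₁nonneg q, hmle, mul_le_mul_of_nonneg_right hmle (hg₁nonneg q)]
      · rw [if_neg hq]
        have : ∀ a : ℤ, (if Q ≤ q ∧ |(a:ℝ)| ≤ ((N:ℝ) + 1) * q
            then ENNReal.ofReal (g₁ q) else 0) = 0 := by
          intro a
          rw [if_neg (by tauto)]
        rw [tsum_congr this]
        simp
    have step4 : (∑' q : ℕ, (if Q ≤ q then f q else 0)) = ∑' k : ℕ, f (k + Q) := by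
      have h := Summable.sum_add_tsum_nat_add' (f := fun q => if Q ≤ q then f q else 0) (k := Q)
        ENNReal.summable
      rw [← h]
      have h1 : (∑ i ∈ Finset.range Q, (if Q ≤ i then f i else 0)) = 0 := by
        apply Finset.sum_eq_zero
        intro i hi
        rw [Finset.mem_range] at hi
        rw [if_neg (by omega)]
      rw [h1, zero_add]
      exact tsum_congr fun k => if_pos (Nat.le_add_left _ _)
    exact le_trans step2 (le_trans step3 (le_of_eq step4))
  -- conclude
  have hliminf : Filter.liminf (fun Q : ℕ => ∑' i : ℚ × ℕ, EMetric.diam (t Q i) ^ (1 + s)) atTop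
      ≤ Filter.liminf (fun Q : ℕ => ∑' k : ℕ, f (k + Q)) atTop := by
    exact Filter.liminf_le_liminf
      (by filter_upwards [eventually_ge_atTop 1] with Q hQ using hsum Q hQ)
  have hlim0 : Filter.liminf (fun Q : ℕ => ∑' k : ℕ, f (k + Q)) atTop = 0 :=
    (ENNReal.tendsto_sum_nat_add f hfin).liminf_eq
  exact le_antisymm (hμH.trans (hliminf.trans (le_of_eq hlim0))) (zero_le)

lemma dimH_prod_Wlim_le {μ s : ℝ} (hμ3 : 3 ≤ μ) (hs : 2 / μ < s) {B : Set ℝ}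
    (hB : B ⊆ Wlim μ) :
    dimH ((univ : Set ℝ) ×ˢ B) ≤ ENNReal.ofReal (1 + s) := by
  have hs0 : (0:ℝ) < s := lt_trans (by positivity) hs
  have hcover : (univ : Set ℝ) ×ˢ B =
      ⋃ N : ℕ, (Icc (-(N:ℝ)) N) ×ˢ (B ∩ Icc (-(N:ℝ)) N) := by
    ext ⟨x, ξ⟩
    simp only [mem_prod, mem_univ, true_and, mem_iUnion, mem_inter_iff, mem_Icc]
    constructor
    · intro hξ
      obtain ⟨N, hN⟩ := exists_nat_ge (max |x| |ξ|)
      have h1 := (abs_le.1 (le_trans (le_max_left |x| |ξ|) hN))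
      have h2 := (abs_le.1 (le_trans (le_max_right |x| |ξ|) hN))
      exact ⟨N, ⟨h1.1, h1.2⟩, hξ, h2.1, h2.2⟩
    · rintro ⟨N, -, hξ, -⟩
      exact hξ
  rw [hcover, dimH_iUnion]
  apply iSup_le
  intro N
  have hmono : (Icc (-(N:ℝ)) N) ×ˢ (B ∩ Icc (-(N:ℝ)) N) ⊆
      (Icc (-(N:ℝ)) N) ×ˢ (Wlim μ ∩ Icc (-(N:ℝ)) N) :=
    Set.prod_mono_right (Set.inter_subset_inter_left _ hB)
  refine le_trans (dimH_mono hmono) ?_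
  have h0 := core_measure_zero hμ3 hs N
  have hd : (0:ℝ) ≤ 1 + s := by linarith
  have := dimH_le_of_hausdorffMeasure_ne_top (X := ℝ × ℝ) (d := ⟨1 + s, hd⟩)
    (s := (Icc (-(N:ℝ)) N) ×ˢ (Wlim μ ∩ Icc (-(N:ℝ)) N)) (by
      show μH[((⟨1 + s, hd⟩ : NNReal) : ℝ)] _ ≠ ⊤
      have he : ((⟨1 + s, hd⟩ : NNReal) : ℝ) = 1 + s := rfl
      rw [he, h0]
      exact ENNReal.zero_ne_top)
  refine le_trans this (le_of_eq ?_)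
  rw [ENNReal.ofReal_eq_coe_nnreal hd]
  rfl

lemma dimH_prod_le_right (A : Set ℝ) {lam1 : ENNReal}
    (h1 : ENNReal.ofReal ((5 + Real.sqrt 17) / 2) < lam1) :
    dimH (A ×ˢ Wexact lam1) ≤ 1 + 2 / lam1 := by
  have hsqrt : (4:ℝ) ≤ Real.sqrt 17 := by
    rw [show (4:ℝ) = Real.sqrt 16 by
      rw [show (16:ℝ) = 4 ^ 2 by norm_num, Real.sqrt_sq (by norm_num)]]
    exact Real.sqrt_le_sqrt (by norm_num)
  have hthr : (4.5:ℝ) ≤ (5 + Real.sqrt 17) / 2 := by linarith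
  have h45 : ENNReal.ofReal 4.5 < lam1 :=
    lt_of_le_of_lt (ENNReal.ofReal_le_ofReal hthr) h1
  have hlam1pos : (0 : ENNReal) < lam1 := lt_of_le_of_lt (zero_le) h45
  refine ENNReal.le_of_forall_pos_le_add fun ε hε hfin' => ?_
  set ε' : ℝ := (ε : ℝ) with hε'def
  have hε'0 : (0:ℝ) < ε' := hε
  have hεeq : ENNReal.ofReal ε' = (ε : ENNReal) := ENNReal.ofReal_coe_nnreal
  obtain ⟨μ, s, hμ3, hμlt, hμs, hofle⟩ :
      ∃ μ s : ℝ, 3 ≤ μ ∧ ENNReal.ofReal μ < lam1 ∧ 2 / μ < s ∧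
        ENNReal.ofReal (1 + s) ≤ 1 + 2 / lam1 + ε := by
    by_cases htop : lam1 = ⊤
    · set M : ℝ := max 3 (8 / ε') with hM
      have hMpos : (0:ℝ) < M := lt_of_lt_of_le (by norm_num) (le_max_left _ _)
      have h2M : 2 / M ≤ ε' / 4 := by
        have h8 : (0:ℝ) < 8 / ε' := by positivity
        calc 2 / M ≤ 2 / (8 / ε') :=
              div_le_div_of_nonneg_left (by norm_num) h8 (le_max_right _ _)
          _ = ε' / 4 := by field_simp; ring
      refine ⟨M, 2 / M + ε' / 2, le_max_left _ _, ?_, by linarith, ?_⟩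
      · rw [htop]; exact ENNReal.ofReal_lt_top
      · have hsle : 2 / M + ε' / 2 ≤ ε' := by linarith
        have : ENNReal.ofReal (1 + (2 / M + ε' / 2)) ≤ ENNReal.ofReal (1 + ε') :=
          ENNReal.ofReal_le_ofReal (by linarith)
        refine le_trans this ?_
        rw [ENNReal.ofReal_add (by norm_num) hε'0.le, ENNReal.ofReal_one, hεeq, htop]
        simp
    · set L : ℝ := lam1.toReal with hL
      have hL45 : (4.5:ℝ) < L := by
        have := (ENNReal.ofReal_lt_iff_lt_toReal (by norm_num) htop).1 h45
        exact this
      have hLpos : (0:ℝ) < L := by linarith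
      set δ : ℝ := min (ε' / 8) (1 / 2) with hδ
      have hδpos : (0:ℝ) < δ := lt_min (by positivity) (by norm_num)
      have hδhalf : δ ≤ 1 / 2 := min_le_right _ _
      have hδε : δ ≤ ε' / 8 := min_le_left _ _
      set μ : ℝ := L / (1 + δ) with hμ
      have h1δ : (0:ℝ) < 1 + δ := by linarith
      have hμ3 : (3:ℝ) ≤ μ := by
        rw [hμ, le_div_iff₀ h1δ]
        nlinarith
      have hμpos : (0:ℝ) < μ := by positivity
      have hμltL : μ < L := by
        rw [hμ]
        exact div_lt_self hLpos (by linarith)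
      have hμlt : ENNReal.ofReal μ < lam1 := by
        rw [← ENNReal.ofReal_toReal htop]
        exact (ENNReal.ofReal_lt_ofReal_iff hLpos).2 hμltL
      refine ⟨μ, 2 / μ + δ, hμ3, hμlt, by linarith, ?_⟩
      have h2μ : 2 / μ = 2 / L + 2 * δ / L := by
        rw [hμ]
        field_simp
      have h2δL : 2 * δ / L ≤ δ := by
        rw [div_le_iff₀ hLpos]
        nlinarith
      have hsle : 2 / μ + δ ≤ 2 / L + ε' := by
        rw [h2μ]
        linarith
      have hofL : ENNReal.ofReal (2 / L) = 2 / lam1 := by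
        rw [ENNReal.ofReal_div_of_pos hLpos, ENNReal.ofReal_toReal htop]
        norm_num
      calc ENNReal.ofReal (1 + (2 / μ + δ)) ≤ ENNReal.ofReal (1 + (2 / L + ε')) :=
            ENNReal.ofReal_le_ofReal (by linarith)
        _ = 1 + (2 / lam1 + ε) := by
            rw [ENNReal.ofReal_add (by norm_num) (by positivity),
              ENNReal.ofReal_add (by positivity) hε'0.le, ENNReal.ofReal_one, hofL, hεeq]
        _ = 1 + 2 / lam1 + ε := by rw [add_assoc]
  calc dimH (A ×ˢ Wexact lam1) ≤ dimH ((univ : Set ℝ) ×ˢ Wexact lam1) :=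
        dimH_mono (Set.prod_mono_left (subset_univ A))
    _ ≤ ENNReal.ofReal (1 + s) := dimH_prod_Wlim_le hμ3 hμs (Wexact_subset_Wlim hμlt)
    _ ≤ 1 + 2 / lam1 + ε := hofle

/-- If `λ₀, λ₁ > (5+√17)/2`, then `𝒲_{λ₀} × 𝒲_{λ₁}` has Hausdorff dimension at
most `1 + 2 / max{λ₀, λ₁}`. -/
theorem dimH_Wexact_prod_le (lam0 lam1 : ENNReal)
    (h0 : ENNReal.ofReal ((5 + Real.sqrt 17) / 2) < lam0)
    (h1 : ENNReal.ofReal ((5 + Real.sqrt 17) / 2) < lam1) :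
    dimH (Wexact lam0 ×ˢ Wexact lam1) ≤ 1 + 2 / max lam0 lam1 := by
  have hswap : Isometry (Prod.swap : ℝ × ℝ → ℝ × ℝ) := by
    intro p q
    simp only [Prod.edist_eq, Prod.swap]
    exact max_comm _ _
  rcases le_total lam0 lam1 with hle | hle
  · rw [max_eq_right hle]
    exact dimH_prod_le_right _ h1
  · rw [max_eq_left hle]
    have him : Wexact lam0 ×ˢ Wexact lam1 = Prod.swap '' (Wexact lam1 ×ˢ Wexact lam0) := by
      rw [Set.image_swap_prod]
    rw [him, hswap.dimH_image]
    exact dimH_prod_le_right _ h0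
end
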